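/- Let V = ℂ² and suppose q : V → V ⊗ V is a linear map such that there exist vectors u₊, u₋ forming a basis of V with q(u₊) = u₊ ⊗ u₊ and q(u₋) = u₋ ⊗ u₋. Define Q : V^⊗L → V^⊗(L+1) by Q = Σ_{j=1}^L (-1)^j q_j, where q_j applies q to the j-th tensor factor. Then for every L ≥ 2, ker{Q : V^⊗L → V^⊗(L+1)} = im{Q : V^⊗(L-1) → V^⊗L}; i.e., the cohomology of Q vanishes in every degree L ≥ 2, and for L = 1 the kernel of Q : V → V⊗V is zero. -/

import Mathlib

open Matrix

noncomputable section

/-- Matrix of the operator `q_j` that applies the local supercharge (with matrix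
elements `qm a b t`, i.e. `q e_t = ∑ a b, qm a b t • e_a ⊗ e_b`) on the `j`-th
tensor factor of `V^⊗L`, `V = ℂ²`. -/
def qjMat (qm : Fin 2 → Fin 2 → Fin 2 → ℂ) (L : ℕ) (j : Fin L) :
    Matrix (Fin (L + 1) → Fin 2) (Fin L → Fin 2) ℂ := fun s s' =>
  if ∀ i : Fin L, i ≠ j → s (Fin.succAbove j.succ i) = s' i then
    qm (s j.castSucc) (s j.succ) (s' j)
  else 0

/-- The supercharge `Q = ∑_{j=1}^L (-1)^j q_j : V^⊗L → V^⊗(L+1)`. -/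
def Qop (qm : Fin 2 → Fin 2 → Fin 2 → ℂ) (L : ℕ) :
    ((Fin L → Fin 2) → ℂ) →ₗ[ℂ] ((Fin (L + 1) → Fin 2) → ℂ) :=
  (∑ j : Fin L, ((-1 : ℂ) ^ ((j : ℕ) + 1)) • qjMat qm L j).mulVecLin

namespace Stmt0Aux

def qm0 : Fin 2 → Fin 2 → Fin 2 → ℂ := fun a b t => if a = t ∧ b = t then 1 else 0

lemma predAbove_val {L : ℕ} (j : Fin L) (k : Fin (L+1)) :
    ((j.predAbove k : Fin L) : ℕ) = if (j:ℕ) < (k:ℕ) then (k:ℕ) - 1 else (k:ℕ) := by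
  unfold Fin.predAbove
  split_ifs with h h1 h2
  · simp [Fin.lt_def] at h ⊢
  · simp [Fin.lt_def] at h h1; omega
  · simp [Fin.lt_def] at h h2; omega
  · simp [Fin.lt_def] at h ⊢

lemma succAbove_val {L : ℕ} (p : Fin (L+1)) (i : Fin L) :
    ((p.succAbove i : Fin (L+1)) : ℕ) = if (i:ℕ) < (p:ℕ) then (i:ℕ) else (i:ℕ)+1 := by
  unfold Fin.succAbove
  split_ifs with h h1 h2
  · simp
  · simp [Fin.lt_def] at h h1; omega
  · simp [Fin.lt_def] at h h2; omega
  · simp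

lemma pA_succAbove {L : ℕ} (j i : Fin L) : j.predAbove ((j.succ).succAbove i) = i := by
  apply Fin.ext
  rw [predAbove_val, succAbove_val]
  simp only [Fin.val_succ]
  split_ifs <;> omega

lemma succAbove_self {L : ℕ} (j : Fin L) : (j.succ).succAbove j = j.castSucc := by
  apply Fin.ext; rw [succAbove_val]; simp

lemma pA_castSucc_self {L : ℕ} (j : Fin L) : j.predAbove j.castSucc = j := by
  apply Fin.ext; rw [predAbove_val]; simp

lemma pA_succ_self {L : ℕ} (j : Fin L) : j.predAbove j.succ = j := by
  apply Fin.ext; rw [predAbove_val]; simp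

/-- characterization of the model `qjMat` as duplication. -/
lemma qjMat_qm0 {L : ℕ} (j : Fin L) (t : Fin (L+1) → Fin 2) (s' : Fin L → Fin 2) :
    qjMat qm0 L j t s' = if t = s' ∘ j.predAbove then 1 else 0 := by
  unfold qjMat qm0
  by_cases ht : t = s' ∘ j.predAbove
  · subst ht
    have hcond : ∀ i : Fin L, i ≠ j → (s' ∘ j.predAbove) (j.succ.succAbove i) = s' i := by
      intro i _; simp [Function.comp, pA_succAbove]
    rw [if_pos hcond, if_pos rfl]
    simp [Function.comp, pA_castSucc_self, pA_succ_self]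
  · rw [if_neg ht]
    split_ifs with h1 h2
    · exfalso; apply ht
      funext k
      rcases eq_or_ne k j.succ with hk | hk
      · subst hk; simpa [Function.comp, pA_succ_self] using h2.2
      · obtain ⟨i, rfl⟩ := Fin.exists_succAbove_eq hk
        rcases eq_or_ne i j with hi | hi
        · subst hi
          simpa [Function.comp, succAbove_self, pA_castSucc_self] using h2.1
        · simpa [Function.comp, pA_succAbove] using h1 i hi
    · rfl
    · rfl


/-! ### first run length -/

open Classical in
/-- length of the initial run of equal letters. -/
noncomputable def fr {n : ℕ} (t : Fin (n+1) → Fin 2) : ℕ :=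
  Nat.find (p := fun c => ∀ h : c < n+1, t ⟨c, h⟩ ≠ t 0)
    ⟨n+1, fun h => absurd h (lt_irrefl _)⟩

open Classical in
lemma fr_spec {n : ℕ} (t : Fin (n+1) → Fin 2) :
    ∀ h : fr t < n+1, t ⟨fr t, h⟩ ≠ t 0 :=
  Nat.find_spec (p := fun c => ∀ h : c < n+1, t ⟨c, h⟩ ≠ t 0)
    ⟨n+1, fun h => absurd h (lt_irrefl _)⟩

lemma fr_min {n : ℕ} (t : Fin (n+1) → Fin 2) (k : Fin (n+1)) (hk : (k : ℕ) < fr t) :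
    t k = t 0 := by
  by_contra hne
  exact Nat.find_min (p := fun c => ∀ h : c < n+1, t ⟨c, h⟩ ≠ t 0)
    ⟨n+1, fun h => absurd h (lt_irrefl _)⟩ hk (fun h' => by simpa using hne)

lemma fr_le {n : ℕ} (t : Fin (n+1) → Fin 2) : fr t ≤ n + 1 :=
  Nat.find_le (fun h => absurd h (lt_irrefl _))

lemma fr_pos {n : ℕ} (t : Fin (n+1) → Fin 2) : 0 < fr t := by
  by_contra h
  push_neg at h
  have h0 : fr t = 0 := Nat.le_zero.mp h
  have := fr_spec t
  rw [h0] at this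
  exact this (Nat.succ_pos n) rfl

lemma fr_eq_iff {n : ℕ} (t : Fin (n+1) → Fin 2) {m : ℕ} (hm : m ≤ n+1) :
    fr t = m ↔ (∀ h : m < n+1, t ⟨m, h⟩ ≠ t 0) ∧
      (∀ (k : ℕ) (h : k < n+1), k < m → t ⟨k, h⟩ = t 0) := by
  rw [fr, Nat.find_eq_iff]
  constructor
  · rintro ⟨h1, h2⟩
    refine ⟨h1, fun k hk hkm => ?_⟩
    by_contra hne
    exact h2 k hkm (fun h' => hne)
  · rintro ⟨h1, h2⟩
    refine ⟨h1, fun k hkm => ?_⟩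
    push_neg
    exact ⟨lt_of_lt_of_le hkm hm, h2 k _ hkm⟩

lemma pA_zero {L : ℕ} (j : Fin (L+1)) : j.predAbove 0 = 0 := by
  apply Fin.ext; rw [predAbove_val]; simp

/-- F1: first run of `dup_j w`. -/
lemma fr_dup {L : ℕ} (w : Fin (L+1) → Fin 2) (j : Fin (L+1)) :
    fr (w ∘ j.predAbove) = if (j : ℕ) < fr w then fr w + 1 else fr w := by
  have hm1 : 0 < fr w := fr_pos w
  have hm2 : fr w ≤ L + 1 := fr_le w
  have h0 : (w ∘ j.predAbove) 0 = w 0 := by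
    simp [Function.comp, pA_zero]
  split_ifs with hj
  · rw [fr_eq_iff _ (by omega)]
    refine ⟨fun h => ?_, fun k hk hkm => ?_⟩
    · rw [h0]
      show w (j.predAbove ⟨fr w + 1, h⟩) ≠ w 0
      have e : j.predAbove ⟨fr w + 1, h⟩ = ⟨fr w, by omega⟩ := by
        apply Fin.ext; rw [predAbove_val]; simp; omega
      rw [e]
      exact fr_spec w (by omega)
    · rw [h0]
      show w (j.predAbove ⟨k, hk⟩) = w 0
      apply fr_min
      rw [predAbove_val]
      simp only [Fin.val_mk]
      split_ifs <;> omega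
  · push_neg at hj
    rw [fr_eq_iff _ (by omega)]
    have hmL : fr w < L + 1 := by have := j.isLt; omega
    refine ⟨fun h => ?_, fun k hk hkm => ?_⟩
    · rw [h0]
      show w (j.predAbove ⟨fr w, h⟩) ≠ w 0
      have e : j.predAbove ⟨fr w, h⟩ = ⟨fr w, hmL⟩ := by
        apply Fin.ext; rw [predAbove_val]; simp; omega
      rw [e]
      exact fr_spec w hmL
    · rw [h0]
      show w (j.predAbove ⟨k, hk⟩) = w 0
      apply fr_min
      rw [predAbove_val]
      simp only [Fin.val_mk]
      split_ifs <;> omega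

/-- F2: deleting the first letter after duplicating at `i+1`. -/
lemma dup_comp {L : ℕ} (w : Fin (L+1) → Fin 2) (i : Fin L) :
    w ∘ (Fin.predAbove i.succ) ∘ Fin.succ = (w ∘ Fin.succ) ∘ Fin.predAbove i := by
  funext k
  simp [Function.comp, Fin.succ_predAbove_succ]

lemma dup_zero {L : ℕ} (w : Fin (L+1) → Fin 2) :
    w ∘ (Fin.predAbove (0 : Fin (L+1))) ∘ Fin.succ = w := by
  funext k
  simp only [Function.comp]
  congr 1

/-- F3: duplicating inside the first run and deleting the first letter gives back `w`. -/
lemma dup_first_run {L : ℕ} (w : Fin (L+1) → Fin 2) (i : Fin L) (h : (i : ℕ) + 1 < fr w) :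
    (w ∘ Fin.succ) ∘ Fin.predAbove i = w := by
  have hm2 : fr w ≤ L + 1 := fr_le w
  funext k
  simp only [Function.comp]
  rcases Nat.lt_or_ge (i : ℕ) (k : ℕ) with hik | hik
  · congr 1
    apply Fin.ext
    simp only [Fin.val_succ]
    rw [predAbove_val]
    split_ifs <;> omega
  · have e1 : Fin.succ (i.predAbove k) = ⟨(k : ℕ) + 1, by omega⟩ := by
      apply Fin.ext
      simp only [Fin.val_succ]
      rw [predAbove_val]
      split_ifs <;> omega
    rw [e1]
    rw [fr_min w _ (by simp; omega)]
    exact (fr_min w k (by omega)).symm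

/-- alternating sum. -/
lemma sum_pow_neg_one {L : ℕ} (c : ℕ) (hc : c ≤ L) :
    (∑ i : Fin L, if (i : ℕ) < c then ((-1 : ℂ)) ^ (i : ℕ) else 0)
      = if Even c then 0 else 1 := by
  have key : ∀ n : ℕ, (∑ i ∈ Finset.range n, ((-1 : ℂ)) ^ i) = if Even n then 0 else 1 := by
    intro n
    induction n with
    | zero => simp
    | succ n ih =>
      rw [Finset.sum_range_succ, ih]
      rcases Nat.even_or_odd n with h | h
      · simp [h, Nat.even_add_one, h.neg_one_pow]
      · have hne : ¬ Even n := Nat.not_even_iff_odd.mpr h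
        rw [if_neg hne, h.neg_one_pow, if_pos (Nat.even_add_one.mpr hne)]
        ring
  rw [Fin.sum_univ_eq_sum_range (fun i => if i < c then ((-1 : ℂ)) ^ i else 0) L]
  rw [← Finset.sum_subset (Finset.range_subset_range.2 hc)
    (fun x _ hx => by rw [if_neg (by simpa using hx)])]
  rw [Finset.sum_congr rfl (fun x hx => if_pos (Finset.mem_range.mp hx))]
  exact key c


/-! ### model supercharge and homotopy -/

def QM (L : ℕ) : Matrix (Fin (L + 1) → Fin 2) (Fin L → Fin 2) ℂ :=
  ∑ j : Fin L, ((-1 : ℂ) ^ ((j : ℕ) + 1)) • qjMat qm0 L j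

lemma Qop_qm0 (L : ℕ) : Qop qm0 L = (QM L).mulVecLin := rfl

def HM (L : ℕ) : Matrix (Fin L → Fin 2) (Fin (L + 1) → Fin 2) ℂ := fun s t =>
  if Even (fr t) ∧ s = t ∘ Fin.succ then -1 else 0

lemma QM_apply (L : ℕ) (t : Fin (L+1) → Fin 2) (w : Fin L → Fin 2) :
    QM L t w = ∑ j : Fin L, (-1 : ℂ) ^ ((j : ℕ) + 1) *
      (if t = w ∘ j.predAbove then 1 else 0) := by
  simp [QM, Matrix.sum_apply, qjMat_qm0]

lemma HMQM (L : ℕ) (s w : Fin (L+1) → Fin 2) :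
    (HM (L+1) * QM (L+1)) s w
      = ∑ j : Fin (L+1), (-1 : ℂ) ^ ((j : ℕ) + 1) *
          (if Even (fr (w ∘ j.predAbove)) ∧ s = w ∘ j.predAbove ∘ Fin.succ
            then (-1 : ℂ) else 0) := by
  rw [Matrix.mul_apply]
  simp_rw [QM_apply, Finset.mul_sum]
  rw [Finset.sum_comm]
  apply Finset.sum_congr rfl
  intro j _
  rw [Finset.sum_eq_single (w ∘ j.predAbove)]
  · simp [HM, mul_comm, Function.comp_assoc]
  · intro t _ ht
    simp [ht]
  · simp

lemma QMHM (L : ℕ) (s w : Fin (L+1) → Fin 2) :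
    (QM L * HM L) s w
      = (if Even (fr w) then (1 : ℂ) else 0) *
        ∑ i : Fin L, (-1 : ℂ) ^ (i : ℕ) *
          (if s = (w ∘ Fin.succ) ∘ i.predAbove then 1 else 0) := by
  rw [Matrix.mul_apply]
  rw [Finset.sum_eq_single (w ∘ Fin.succ)]
  · rw [QM_apply]
    by_cases he : Even (fr w)
    · rw [if_pos he, one_mul, Finset.sum_mul]
      apply Finset.sum_congr rfl
      intro i _
      have : HM L (w ∘ Fin.succ) w = -1 := by simp [HM, he]
      rw [this]
      rw [pow_succ]
      split_ifs <;> ring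
    · have : HM L (w ∘ Fin.succ) w = 0 := by simp [HM, he]
      rw [this, if_neg he, zero_mul, mul_zero]
  · intro t _ ht
    have : HM L t w = 0 := by simp [HM, ht]
    rw [this, mul_zero]
  · simp

lemma homotopy (L : ℕ) : HM (L+1) * QM (L+1) + QM L * HM L = 1 := by
  ext s w
  rw [Matrix.add_apply, HMQM, QMHM]
  have hm1 : 0 < fr w := fr_pos w
  have hm2 : fr w ≤ L + 1 := fr_le w
  set m := fr w with hm
  rw [Fin.sum_univ_succ]
  have e0 : fr (w ∘ (0 : Fin (L+1)).predAbove) = m + 1 := by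
    rw [fr_dup]
    rw [if_pos (by simpa using hm1)]
  have e0' : w ∘ (0 : Fin (L+1)).predAbove ∘ Fin.succ = w := dup_zero w
  rw [e0, e0']
  rw [Finset.mul_sum, add_assoc, ← Finset.sum_add_distrib]
  have key : ∀ i : Fin L,
      (-1 : ℂ) ^ ((i.succ : ℕ) + 1) *
          (if Even (fr (w ∘ (i.succ : Fin (L+1)).predAbove)) ∧
              s = w ∘ (i.succ : Fin (L+1)).predAbove ∘ Fin.succ then (-1 : ℂ) else 0)
        + (if Even m then (1 : ℂ) else 0) *
            ((-1 : ℂ) ^ (i : ℕ) * (if s = (w ∘ Fin.succ) ∘ i.predAbove then 1 else 0))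
      = (if s = w then 1 else 0) *
          (if (i : ℕ) < m - 1 then (if Even m then (1:ℂ) else -1) * (-1 : ℂ) ^ (i : ℕ) else 0) := by
    intro i
    rw [dup_comp]
    have hfr := fr_dup w (i.succ : Fin (L+1))
    have hpar : Even (m + 1) ↔ ¬ Even m := by simp [Nat.even_add_one]
    by_cases hi : (i : ℕ) + 1 < m
    · have hfr' : fr (w ∘ (i.succ : Fin (L+1)).predAbove) = m + 1 := by
        rw [hfr, if_pos (by simpa [Fin.val_succ] using hi)]
      rw [hfr', dup_first_run w i (by omega)]
      rw [if_pos (by omega : (i : ℕ) < m - 1), Fin.val_succ]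
      split_ifs <;> first | ring1 | (exfalso; tauto)
    · have hfr' : fr (w ∘ (i.succ : Fin (L+1)).predAbove) = m := by
        rw [hfr, if_neg (by simpa [Fin.val_succ] using hi)]
      rw [hfr', if_neg (by omega : ¬ (i : ℕ) < m - 1), mul_zero, Fin.val_succ]
      split_ifs <;> first | ring1 | (exfalso; tauto)
  rw [Finset.sum_congr rfl (fun i _ => key i)]
  have pull : ∀ i : Fin L,
      (if s = w then (1:ℂ) else 0) *
          (if (i : ℕ) < m - 1 then (if Even m then (1:ℂ) else -1) * (-1 : ℂ) ^ (i : ℕ) else 0)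
      = (if s = w then (1:ℂ) else 0) * (if Even m then (1:ℂ) else -1) *
          (if (i : ℕ) < m - 1 then (-1 : ℂ) ^ (i : ℕ) else 0) := by
    intro i
    split_ifs <;> ring
  rw [Finset.sum_congr rfl (fun i _ => pull i), ← Finset.mul_sum]
  rw [sum_pow_neg_one (m - 1) (by omega)]
  have hparity : Even (m - 1) ↔ ¬ Even m := by
    rw [Nat.even_sub (by omega : 1 ≤ m)]
    simp [Nat.even_iff, Nat.odd_iff]
  have hpar : Even (m + 1) ↔ ¬ Even m := by simp [Nat.even_add_one]
  rw [Matrix.one_apply]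
  simp only [Fin.val_zero]
  split_ifs <;> first | ring1 | (exfalso; tauto)

/-! ### Q² = 0 for the model -/

lemma word_pA_pA {L : ℕ} (w : Fin L → Fin 2) (i : Fin (L+1)) (j : Fin L)
    (hij : (i : ℕ) ≤ (j : ℕ)) :
    (w ∘ Fin.predAbove j) ∘ Fin.predAbove i
      = (w ∘ Fin.predAbove (⟨(i : ℕ), lt_of_le_of_lt hij j.isLt⟩ : Fin L))
          ∘ Fin.predAbove (j.succ) := by
  funext k
  simp only [Function.comp_apply]
  congr 1
  apply Fin.ext
  simp only [predAbove_val, Fin.val_mk, Fin.val_succ]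
  split_ifs <;> omega

lemma QM_mul_QM (L : ℕ) : QM (L+1) * QM L = 0 := by
  ext s w
  rw [Matrix.mul_apply, Matrix.zero_apply]
  have expand : ∀ t : Fin (L+1) → Fin 2,
      QM (L+1) s t * QM L t w
        = ∑ i : Fin (L+1), ∑ j : Fin L,
            ((-1 : ℂ) ^ ((i : ℕ) + 1) * (if s = t ∘ i.predAbove then 1 else 0)) *
            ((-1 : ℂ) ^ ((j : ℕ) + 1) * (if t = w ∘ j.predAbove then 1 else 0)) := by
    intro t
    rw [QM_apply, QM_apply, Finset.sum_mul]
    apply Finset.sum_congr rfl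
    intro i _
    rw [Finset.mul_sum]
  simp_rw [expand]
  rw [Finset.sum_comm]
  have collapse : ∀ i : Fin (L+1),
      (∑ t : Fin (L+1) → Fin 2, ∑ j : Fin L,
        ((-1 : ℂ) ^ ((i : ℕ) + 1) * (if s = t ∘ i.predAbove then 1 else 0)) *
        ((-1 : ℂ) ^ ((j : ℕ) + 1) * (if t = w ∘ j.predAbove then 1 else 0)))
      = ∑ j : Fin L, (-1 : ℂ) ^ ((i : ℕ) + 1) * (-1 : ℂ) ^ ((j : ℕ) + 1) *
          (if s = (w ∘ j.predAbove) ∘ i.predAbove then 1 else 0) := by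
    intro i
    rw [Finset.sum_comm]
    apply Finset.sum_congr rfl
    intro j _
    rw [Finset.sum_eq_single (w ∘ j.predAbove)]
    · rw [if_pos rfl]
      split_ifs <;> ring
    · intro t _ ht
      rw [if_neg ht]
      ring
    · simp
  rw [Finset.sum_congr rfl (fun i _ => collapse i)]
  rw [← Finset.sum_product']
  apply Finset.sum_involution
    (g := fun (p : Fin (L+1) × Fin L) _ =>
      if h : (p.1 : ℕ) ≤ (p.2 : ℕ) then
        ((p.2.succ : Fin (L+1)), (⟨(p.1 : ℕ), lt_of_le_of_lt h p.2.isLt⟩ : Fin L))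
      else
        ((⟨(p.2 : ℕ), lt_trans p.2.isLt (Nat.lt_succ_self L)⟩ : Fin (L+1)),
          (⟨(p.1 : ℕ) - 1, by have := p.1.isLt; have := p.2.isLt; omega⟩ : Fin L)))
  · rintro ⟨i, j⟩ _
    by_cases h : (i : ℕ) ≤ (j : ℕ)
    · rw [dif_pos h]
      rw [word_pA_pA w i j h]
      simp only [Fin.val_succ, Fin.val_mk]
      split_ifs <;> ring
    · rw [dif_neg h]
      push_neg at h
      have h1 : 1 ≤ (i : ℕ) := by omega
      have key := word_pA_pA w (⟨(j : ℕ), lt_trans j.isLt (Nat.lt_succ_self L)⟩ : Fin (L+1))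
        (⟨(i : ℕ) - 1, by have := i.isLt; omega⟩ : Fin L)
        (by simp only [Fin.val_mk]; omega)
      have e2 : (⟨(i : ℕ) - 1, by have := i.isLt; omega⟩ : Fin L).succ = i := by
        apply Fin.ext; simp only [Fin.val_succ, Fin.val_mk]; omega
      rw [e2] at key
      have e3 : (⟨((⟨(j : ℕ), lt_trans j.isLt (Nat.lt_succ_self L)⟩ : Fin (L+1)) : ℕ),
          lt_of_le_of_lt (by simp only [Fin.val_mk]; omega)
            (⟨(i : ℕ) - 1, by have := i.isLt; omega⟩ : Fin L).isLt⟩ : Fin L) = j := by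
        apply Fin.ext; simp only [Fin.val_mk]
      rw [e3] at key
      rw [← key]
      simp only [Fin.val_mk]
      have hpow : (-1 : ℂ) ^ ((i : ℕ) + 1) = -(-1 : ℂ) ^ (((i : ℕ) - 1) + 1) := by
        have : (i : ℕ) + 1 = (((i : ℕ) - 1) + 1) + 1 := by omega
        rw [this, pow_succ]
        ring
      rw [hpow]
      split_ifs <;> ring
  · rintro ⟨i, j⟩ _ _
    by_cases h : (i : ℕ) ≤ (j : ℕ)
    · rw [dif_pos h]
      intro hc
      have := congrArg (fun p => (p.1 : ℕ)) hc
      simp at this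
      omega
    · rw [dif_neg h]
      push_neg at h
      intro hc
      have := congrArg (fun p => (p.1 : ℕ)) hc
      simp at this
      omega
  · rintro ⟨i, j⟩ _
    by_cases h : (i : ℕ) ≤ (j : ℕ)
    · rw [dif_pos h]
      rw [dif_neg (by simp only [Fin.val_succ, Fin.val_mk]; omega)]
      refine Prod.ext ?_ ?_ <;> apply Fin.ext <;>
        simp only [Fin.val_succ, Fin.val_mk] <;> omega
    · rw [dif_neg h]
      push_neg at h
      rw [dif_pos (by simp only [Fin.val_succ, Fin.val_mk]; omega)]
      refine Prod.ext ?_ ?_ <;> apply Fin.ext <;>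
        simp only [Fin.val_succ, Fin.val_mk] <;> omega
  · intro a _
    simp


/-! ### model cohomology -/

lemma QM_zero : QM 0 = 0 := by
  simp [QM]

lemma ker_model_one : LinearMap.ker (Qop qm0 1) = ⊥ := by
  have h := homotopy 0
  rw [QM_zero, Matrix.zero_mul, add_zero] at h
  refine (Submodule.eq_bot_iff _).mpr fun x hx => ?_
  have hx' : (QM 1).mulVec x = 0 := by
    simpa [Qop_qm0, Matrix.mulVecLin_apply] using hx
  calc x = (HM 1 * QM 1).mulVec x := by rw [h, Matrix.one_mulVec]
  _ = (HM 1).mulVec ((QM 1).mulVec x) := by rw [Matrix.mulVec_mulVec]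
  _ = 0 := by rw [hx', Matrix.mulVec_zero]

lemma ker_model (L : ℕ) :
    LinearMap.ker (Qop qm0 (L+1)) = LinearMap.range (Qop qm0 L) := by
  apply le_antisymm
  · intro x hx
    have hx' : (QM (L+1)).mulVec x = 0 := by
      simpa [Qop_qm0, Matrix.mulVecLin_apply] using hx
    have h : (HM (L+1) * QM (L+1)).mulVec x + (QM L * HM L).mulVec x = x := by
      rw [← Matrix.add_mulVec, homotopy L, Matrix.one_mulVec]
    have hz : (HM (L+1) * QM (L+1)).mulVec x = 0 := by
      rw [← Matrix.mulVec_mulVec, hx', Matrix.mulVec_zero]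
    refine ⟨(HM L).mulVec x, ?_⟩
    show (QM L).mulVecLin ((HM L).mulVec x) = x
    rw [Matrix.mulVecLin_apply, Matrix.mulVec_mulVec]
    calc (QM L * HM L).mulVec x = 0 + (QM L * HM L).mulVec x := (zero_add _).symm
    _ = (HM (L+1) * QM (L+1)).mulVec x + (QM L * HM L).mulVec x := by rw [hz]
    _ = x := h
  · rintro x ⟨y, rfl⟩
    show (QM (L+1)).mulVecLin ((QM L).mulVecLin y) = 0
    rw [Matrix.mulVecLin_apply, Matrix.mulVecLin_apply, Matrix.mulVec_mulVec,
      QM_mul_QM, Matrix.zero_mulVec]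


/-! ### Kronecker powers and conjugation -/

def PL (P : Matrix (Fin 2) (Fin 2) ℂ) (L : ℕ) :
    Matrix (Fin L → Fin 2) (Fin L → Fin 2) ℂ :=
  fun s t => ∏ i, P (s i) (t i)

lemma PL_mul (P R : Matrix (Fin 2) (Fin 2) ℂ) (L : ℕ) :
    PL P L * PL R L = PL (P * R) L := by
  ext s u
  rw [Matrix.mul_apply]
  show (∑ t : Fin L → Fin 2, (∏ i, P (s i) (t i)) * ∏ i, R (t i) (u i))
    = ∏ i, (P * R) (s i) (u i)
  simp_rw [← Finset.prod_mul_distrib]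
  rw [← Fintype.piFinset_univ]
  have key := Finset.prod_univ_sum (fun _ : Fin L => (Finset.univ : Finset (Fin 2)))
    (fun i y => P (s i) y * R y (u i))
  rw [← key]
  apply Finset.prod_congr rfl
  intro i _
  rw [Matrix.mul_apply]

lemma PL_one (L : ℕ) : PL (1 : Matrix (Fin 2) (Fin 2) ℂ) L = 1 := by
  ext s t
  by_cases h : s = t
  · subst h
    show (∏ i, (1 : Matrix (Fin 2) (Fin 2) ℂ) (s i) (s i)) = (1 : Matrix _ _ ℂ) s s
    simp [Matrix.one_apply]
  · rw [Matrix.one_apply_ne h]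
    obtain ⟨i, hi⟩ : ∃ i, s i ≠ t i := by
      by_contra hc
      push_neg at hc
      exact h (funext hc)
    apply Finset.prod_eq_zero (Finset.mem_univ i)
    simp [Matrix.one_apply, hi]

lemma sum_update {L : ℕ} (g : Fin L → Fin 2) (j : Fin L) (F : (Fin L → Fin 2) → ℂ) :
    (∑ t : Fin L → Fin 2, if ∀ i, i ≠ j → g i = t i then F t else 0)
      = ∑ x : Fin 2, F (Function.update g j x) := by
  have step : ∀ t : Fin L → Fin 2,
      (if ∀ i, i ≠ j → g i = t i then F t else 0)
        = ∑ x : Fin 2, if t = Function.update g j x then F t else 0 := by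
    intro t
    by_cases h : ∀ i, i ≠ j → g i = t i
    · have ht : t = Function.update g j (t j) := by
        funext i
        rcases eq_or_ne i j with rfl | hi
        · simp
        · rw [Function.update_of_ne hi]
          exact (h i hi).symm
      rw [if_pos h, Finset.sum_eq_single (t j)]
      · rw [if_pos ht]
      · intro x _ hx
        rw [if_neg]
        intro hc
        apply hx
        have := congrArg (fun u => u j) hc
        simpa using this.symm
      · simp
    · rw [if_neg h]
      symm
      apply Finset.sum_eq_zero
      intro x _
      rw [if_neg]
      intro hc
      apply h
      intro i hi
      rw [hc, Function.update_of_ne hi]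
  simp_rw [step]
  rw [Finset.sum_comm]
  apply Finset.sum_congr rfl
  intro x _
  rw [Finset.sum_eq_single (Function.update g j x)]
  · rw [if_pos rfl]
  · intro t _ ht
    rw [if_neg ht]
  · simp

lemma intertwine (qm : Fin 2 → Fin 2 → Fin 2 → ℂ) (B : Matrix (Fin 2) (Fin 2) ℂ)
    (hP : ∀ a b c, (∑ x : Fin 2, qm a b x * B x c) = B a c * B b c)
    (L : ℕ) (j : Fin L) :
    qjMat qm L j * PL B L = PL B (L+1) * qjMat qm0 L j := by
  ext s s'
  rw [Matrix.mul_apply, Matrix.mul_apply]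
  have hR : (∑ t, PL B (L+1) s t * qjMat qm0 L j t s')
      = ∏ k, B (s k) ((s' ∘ j.predAbove) k) := by
    rw [Finset.sum_eq_single (s' ∘ j.predAbove)]
    · rw [qjMat_qm0, if_pos rfl, mul_one]
      rfl
    · intro t _ ht
      rw [qjMat_qm0, if_neg ht, mul_zero]
    · simp
  rw [hR]
  have hL : ∀ t : Fin L → Fin 2, qjMat qm L j s t * PL B L t s'
      = if ∀ i, i ≠ j → s (Fin.succAbove j.succ i) = t i then
          (qm (s j.castSucc) (s j.succ) (t j) * ∏ i, B (t i) (s' i)) else 0 := by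
    intro t
    show (if ∀ i, i ≠ j → s (Fin.succAbove j.succ i) = t i then
        qm (s j.castSucc) (s j.succ) (t j) else 0) * (∏ i, B (t i) (s' i)) = _
    rw [ite_mul, zero_mul]
  simp_rw [hL]
  rw [sum_update (fun i => s (Fin.succAbove j.succ i)) j
    (fun t => qm (s j.castSucc) (s j.succ) (t j) * ∏ i, B (t i) (s' i))]
  have hprod : ∀ x : Fin 2,
      (∏ i, B (Function.update (fun i => s (Fin.succAbove j.succ i)) j x i) (s' i))
        = B x (s' j) * ∏ i ∈ Finset.univ.erase j, B (s (Fin.succAbove j.succ i)) (s' i) := by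
    intro x
    rw [← Finset.mul_prod_erase Finset.univ _ (Finset.mem_univ j)]
    rw [Function.update_self]
    congr 1
    apply Finset.prod_congr rfl
    intro i hi
    rw [Function.update_of_ne (Finset.ne_of_mem_erase hi)]
  simp_rw [hprod, Function.update_self, ← mul_assoc]
  rw [← Finset.sum_mul, hP]
  rw [Fin.prod_univ_succAbove (fun k => B (s k) ((s' ∘ j.predAbove) k)) j.succ]
  have e1 : (s' ∘ j.predAbove) j.succ = s' j := by
    simp [Function.comp, pA_succ_self]
  have e2 : ∀ i : Fin L, (s' ∘ j.predAbove) (Fin.succAbove j.succ i) = s' i := by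
    intro i
    simp [Function.comp, pA_succAbove]
  simp_rw [e1, e2]
  rw [← Finset.mul_prod_erase Finset.univ
    (fun i => B (s (Fin.succAbove j.succ i)) (s' i)) (Finset.mem_univ j), succAbove_self]
  ring


lemma intertwine_Q (qm : Fin 2 → Fin 2 → Fin 2 → ℂ) (B : Matrix (Fin 2) (Fin 2) ℂ)
    (hP : ∀ a b c, (∑ x : Fin 2, qm a b x * B x c) = B a c * B b c) (L : ℕ) :
    (∑ j : Fin L, ((-1 : ℂ) ^ ((j : ℕ) + 1)) • qjMat qm L j) * PL B L
      = PL B (L+1) * QM L := by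
  rw [Matrix.sum_mul, QM, Matrix.mul_sum]
  apply Finset.sum_congr rfl
  intro j _
  rw [Matrix.smul_mul, Matrix.mul_smul, intertwine qm B hP L j]

def kroneq (B C : Matrix (Fin 2) (Fin 2) ℂ) (hBC : B * C = 1) (hCB : C * B = 1) (L : ℕ) :
    ((Fin L → Fin 2) → ℂ) ≃ₗ[ℂ] ((Fin L → Fin 2) → ℂ) :=
  LinearEquiv.ofLinear (PL B L).mulVecLin (PL C L).mulVecLin
    (by rw [← Matrix.mulVecLin_mul, PL_mul, hBC, PL_one, Matrix.mulVecLin_one])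
    (by rw [← Matrix.mulVecLin_mul, PL_mul, hCB, PL_one, Matrix.mulVecLin_one])

lemma comm_lemma (qm : Fin 2 → Fin 2 → Fin 2 → ℂ) (B C : Matrix (Fin 2) (Fin 2) ℂ)
    (hBC : B * C = 1) (hCB : C * B = 1)
    (hP : ∀ a b c, (∑ x : Fin 2, qm a b x * B x c) = B a c * B b c) (L : ℕ) :
    (Qop qm L).comp (kroneq B C hBC hCB L : ((Fin L → Fin 2) → ℂ) →ₗ[ℂ] _)
      = ((kroneq B C hBC hCB (L+1) : ((Fin (L+1) → Fin 2) → ℂ) →ₗ[ℂ] _)).comp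
          (Qop qm0 L) := by
  show (Qop qm L).comp (PL B L).mulVecLin = (PL B (L+1)).mulVecLin.comp (Qop qm0 L)
  rw [Qop, Qop_qm0, ← Matrix.mulVecLin_mul, ← Matrix.mulVecLin_mul,
    intertwine_Q qm B hP L]

lemma conj_ker_range {A A' B B' : Type*} [AddCommGroup A] [AddCommGroup A']
    [AddCommGroup B] [AddCommGroup B'] [Module ℂ A] [Module ℂ A'] [Module ℂ B] [Module ℂ B']
    (f : A →ₗ[ℂ] B) (g : A' →ₗ[ℂ] B') (e : A' ≃ₗ[ℂ] A) (e' : B' ≃ₗ[ℂ] B)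
    (hc : f.comp (e : A' →ₗ[ℂ] A) = (e' : B' →ₗ[ℂ] B).comp g) :
    LinearMap.ker f = Submodule.map (e : A' →ₗ[ℂ] A) (LinearMap.ker g) ∧
      LinearMap.range f = Submodule.map (e' : B' →ₗ[ℂ] B) (LinearMap.range g) := by
  have happ : ∀ y, f (e y) = e' (g y) := fun y => LinearMap.congr_fun hc y
  constructor
  · ext x
    simp only [LinearMap.mem_ker, Submodule.mem_map]
    constructor
    · intro hx
      refine ⟨e.symm x, ?_, e.apply_symm_apply x⟩
      show g (e.symm x) = 0
      apply e'.injective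
      rw [map_zero, ← happ, e.apply_symm_apply]
      exact hx
    · rintro ⟨y, hy, rfl⟩
      show f (e y) = 0
      rw [happ, hy, map_zero]
  · ext z
    simp only [LinearMap.mem_range, Submodule.mem_map]
    constructor
    · rintro ⟨x, rfl⟩
      refine ⟨g (e.symm x), ⟨e.symm x, rfl⟩, ?_⟩
      show e' (g (e.symm x)) = f x
      rw [← happ, e.apply_symm_apply]
    · rintro ⟨z', ⟨y, rfl⟩, rfl⟩
      exact ⟨e y, happ y⟩

lemma main_aux (qm : Fin 2 → Fin 2 → Fin 2 → ℂ) (B C : Matrix (Fin 2) (Fin 2) ℂ)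
    (hBC : B * C = 1) (hCB : C * B = 1)
    (hP : ∀ a b c, (∑ x : Fin 2, qm a b x * B x c) = B a c * B b c) :
    LinearMap.ker (Qop qm 1) = ⊥ ∧
      ∀ L : ℕ, 1 ≤ L →
        LinearMap.ker (Qop qm (L + 1)) = LinearMap.range (Qop qm L) := by
  have hk := fun L => conj_ker_range (Qop qm L) (Qop qm0 L)
    (kroneq B C hBC hCB L) (kroneq B C hBC hCB (L+1))
    (comm_lemma qm B C hBC hCB hP L)
  constructor
  · rw [(hk 1).1, ker_model_one, Submodule.map_bot]
  · intro L _
    rw [(hk (L+1)).1, ker_model L, ← (hk L).2]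

end Stmt0Aux

/-- if `q u₊ = u₊ ⊗ u₊` and `q u₋ = u₋ ⊗ u₋` for a basis `u₊, u₋` of `ℂ²`,
then `ker Q = 0` for `L = 1` and `ker Q = im Q` in every degree `L ≥ 2`. -/
theorem stmt0 (qm : Fin 2 → Fin 2 → Fin 2 → ℂ) (up um : Fin 2 → ℂ)
    (hbasis : LinearIndependent ℂ ![up, um])
    (hup : ∀ a b : Fin 2, ∑ t : Fin 2, qm a b t * up t = up a * up b)
    (hum : ∀ a b : Fin 2, ∑ t : Fin 2, qm a b t * um t = um a * um b) :
    LinearMap.ker (Qop qm 1) = ⊥ ∧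
      ∀ L : ℕ, 1 ≤ L →
        LinearMap.ker (Qop qm (L + 1)) = LinearMap.range (Qop qm L) := by
  classical
  set B : Matrix (Fin 2) (Fin 2) ℂ := (Matrix.of ![up, um])ᵀ with hB
  have hBu : IsUnit B := by
    rw [hB, Matrix.isUnit_transpose, ← Matrix.linearIndependent_rows_iff_isUnit]
    exact hbasis
  obtain ⟨u, hu⟩ := hBu
  have hBC : B * (↑u⁻¹ : Matrix (Fin 2) (Fin 2) ℂ) = 1 := by
    rw [← hu]; exact u.mul_inv
  have hCB : (↑u⁻¹ : Matrix (Fin 2) (Fin 2) ℂ) * B = 1 := by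
    rw [← hu]; exact u.inv_mul
  apply Stmt0Aux.main_aux qm B (↑u⁻¹) hBC hCB
  intro a b c
  fin_cases c
  · simpa [hB, Matrix.transpose_apply] using hup a b
  · simpa [hB, Matrix.transpose_apply] using hum a b
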